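/- Let (A_1,B_1),...,(A_m,B_m) be pairs of subspaces of ℝ^n with dim(A_i ∩ B_i) = 0 for all i, dim(A_i) = a, dim(B_i) = b for all i, and dim(A_i ∩ B_j) > 0 whenever i < j. Then m ≤ C(a+b, a). -/

import Mathlib

open Module

section Aux

/-- Triangular systems are linearly independent. -/
lemma sb_triangular {M : Type*} [AddCommGroup M] [Module ℝ M] {m : ℕ}
    (F : Fin m → M) (φ : Fin m → (M →ₗ[ℝ] ℝ))
    (hdiag : ∀ i, φ i (F i) ≠ 0) (hzero : ∀ i j : Fin m, i < j → φ j (F i) = 0) :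
    LinearIndependent ℝ F := by
  rw [linearIndependent_iff']
  intro s c hsum
  by_contra hc
  push_neg at hc
  obtain ⟨i₀, hi₀s, hi₀⟩ := hc
  have hne : (s.filter fun i => c i ≠ 0).Nonempty := ⟨i₀, Finset.mem_filter.2 ⟨hi₀s, hi₀⟩⟩
  obtain ⟨i, hi, hmax⟩ := (s.filter fun i => c i ≠ 0).exists_max_image id hne
  rw [Finset.mem_filter] at hi
  have h0 := congrArg (φ i) hsum
  rw [map_sum, map_zero] at h0
  have : ∀ j ∈ s, j ≠ i → φ i (c j • F j) = 0 := by
    intro j hj hji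
    rcases lt_trichotomy j i with h | h | h
    · simp [hzero j i h]
    · exact absurd h hji
    · have : c j = 0 := by
        by_contra hcj
        have := hmax j (Finset.mem_filter.2 ⟨hj, hcj⟩)
        simp only [id] at this
        exact absurd rfl (lt_of_lt_of_le h this).ne
      simp [this]
  rw [Finset.sum_eq_single i this (fun h => absurd hi.1 h)] at h0
  simp only [map_smul, smul_eq_mul] at h0
  exact hi.2 (by rcases mul_eq_zero.1 h0 with h | h; exact h; exact absurd h (hdiag i))

/-- Existence of a subspace of any admissible dimension intersecting finitely many
given subspaces trivially. -/
lemma sb_exists_compl {V : Type*} [AddCommGroup V] [Module ℝ V] [FiniteDimensional ℝ V]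
    {ι : Type*} [Finite ι] (D : ι → Submodule ℝ V) {N : ℕ}
    (hD : ∀ i, finrank ℝ (D i) ≤ N) :
    ∀ k, k + N ≤ finrank ℝ V →
      ∃ C : Submodule ℝ V, finrank ℝ C = k ∧ ∀ i, C ⊓ D i = ⊥ := by
  intro k
  induction k with
  | zero => exact fun _ => ⟨⊥, finrank_bot ℝ V, fun i => bot_inf_eq _⟩
  | succ k ih =>
    intro hk
    obtain ⟨C, hCrank, hCD⟩ := ih (by omega)
    set P : Option ι → Submodule ℝ V := fun o => o.elim C (fun i => C ⊔ D i) with hP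
    have hproper : ∀ o, P o ≠ ⊤ := by
      intro o htop
      have hle : finrank ℝ (P o) ≤ k + N := by
        rcases o with _ | i
        · simp [P, hCrank]
          exact hCrank.le.trans (Nat.le_add_right _ _)
        · simp only [P, Option.elim]
          calc finrank ℝ ↥(C ⊔ D i) ≤ finrank ℝ C + finrank ℝ (D i) := by
                have := Submodule.finrank_add_le_finrank_add_finrank C (D i)
                omega
             _ ≤ k + N := by have := hD i; omega
      rw [htop, finrank_top] at hle
      omega
    haveI := Fintype.ofFinite (PLift ι)
    haveI : Finite (Option ι) := by
      have : Finite (PLift ι) := inferInstance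
      exact Finite.of_equiv (Option (PLift ι)) (Equiv.optionCongr Equiv.plift)
    have hcov : (⋃ o, (P o : Set V)) ≠ Set.univ := by
      intro h
      obtain ⟨o, ho⟩ := Subspace.exists_eq_top_of_iUnion_eq_univ h
      exact hproper o ho
    obtain ⟨x, hx⟩ := Set.ne_univ_iff_exists_notMem _ |>.1 hcov
    simp only [Set.mem_iUnion, not_exists, SetLike.mem_coe] at hx
    have hxC : x ∉ C := hx none
    have hxCD : ∀ i, x ∉ C ⊔ D i := fun i => hx (some i)
    have hx0 : x ≠ 0 := fun h => hxC (h ▸ C.zero_mem)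
    refine ⟨C ⊔ ℝ ∙ x, ?_, ?_⟩
    · have h1 : finrank ℝ ↥(C ⊔ ℝ ∙ x) ≤ k + 1 := by
        have := Submodule.finrank_add_le_finrank_add_finrank C (ℝ ∙ x)
        rw [hCrank, finrank_span_singleton hx0] at this
        exact this
      have h2 : k < finrank ℝ ↥(C ⊔ ℝ ∙ x) := by
        rw [← hCrank]
        exact Submodule.finrank_lt_finrank_of_lt
          (lt_of_le_of_ne le_sup_left (fun h => hxC (h ▸ Submodule.mem_sup_right
            (Submodule.mem_span_singleton_self x))))
      omega
    · intro i
      rw [eq_bot_iff]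
      rintro y ⟨hy1, hy2⟩
      obtain ⟨c, hc, z, hz, rfl⟩ := Submodule.mem_sup.1 hy1
      obtain ⟨t, rfl⟩ := Submodule.mem_span_singleton.1 hz
      rcases eq_or_ne t 0 with rfl | ht
      · have : c ∈ C ⊓ D i := ⟨hc, by simpa using hy2⟩
        rw [hCD i] at this
        simpa using this
      · exfalso
        apply hxCD i
        have : t • x = (c + t • x) - c := by abel
        have hmem : t • x ∈ C ⊔ D i := by
          rw [this]
          exact sub_mem (Submodule.mem_sup_right hy2) (Submodule.mem_sup_left hc)
        have := (C ⊔ D i).smul_mem t⁻¹ hmem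
        rwa [smul_smul, inv_mul_cancel₀ ht, one_smul] at this

variable {a b : ℕ} {W : Type*} [AddCommGroup W] [Module ℝ W]

lemma sb_append_eq (f : Fin a → W) (g : Fin b → W) :
    Fin.append f g = fun t => Sum.elim f g (finSumFinEquiv.symm t) := by
  funext t
  rcases h : finSumFinEquiv.symm t with i | i
  · have ht : t = Fin.castAdd b i := by
      rw [← finSumFinEquiv_apply_left i, ← h, Equiv.apply_symm_apply]
    rw [ht, Fin.append_left]
    simp
  · have ht : t = Fin.natAdd a i := by
      rw [← finSumFinEquiv_apply_right i, ← h, Equiv.apply_symm_apply]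
    rw [ht, Fin.append_right]
    simp

lemma sb_range_append (f : Fin a → W) (g : Fin b → W) :
    Set.range (Fin.append f g) = Set.range f ∪ Set.range g := by
  rw [sb_append_eq]
  rw [show (fun t => Sum.elim f g (finSumFinEquiv.symm t)) = Sum.elim f g ∘ finSumFinEquiv.symm
    from rfl]
  rw [Set.range_comp, Equiv.range_eq_univ, Set.image_univ, Set.Sum.elim_range f g]

/-- Fixing the first `a` arguments of an alternating map in `a+b` arguments gives
an alternating map in `b` arguments. -/
noncomputable def sb_curry (f : W [⋀^Fin (a+b)]→ₗ[ℝ] ℝ) (u : Fin a → W) :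
    W [⋀^Fin b]→ₗ[ℝ] ℝ where
  toMultilinearMap := (f.toMultilinearMap.domDomCongr finSumFinEquiv.symm).currySum u
  map_eq_zero_of_eq' := by
    intro w k l hw hkl
    have : (f.toMultilinearMap.domDomCongr finSumFinEquiv.symm).currySum u w
        = f (fun t => Sum.elim u w (finSumFinEquiv.symm t)) := by
      simp [MultilinearMap.currySum_apply, MultilinearMap.domDomCongr_apply]
      rfl
    change (f.toMultilinearMap.domDomCongr finSumFinEquiv.symm).currySum u w = 0
    rw [this]
    refine f.map_eq_zero_of_eq _ (i := finSumFinEquiv (Sum.inr k)) (j := finSumFinEquiv (Sum.inr l)) ?_ ?_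
    · simp [hw]
    · intro h
      apply hkl
      have := congrArg Fin.val h
      simp [Fin.natAdd] at this
      exact Fin.ext this

lemma sb_curry_apply (f : W [⋀^Fin (a+b)]→ₗ[ℝ] ℝ) (u : Fin a → W) (w : Fin b → W) :
    sb_curry f u w = f (Fin.append u w) := by
  show (f.toMultilinearMap.domDomCongr finSumFinEquiv.symm).currySum u w = _
  simp only [MultilinearMap.currySum_apply, MultilinearMap.domDomCongr_apply]
  rw [sb_append_eq]
  rfl

/-- Evaluation of alternating maps at a fixed tuple, as a linear map. -/
noncomputable def sb_eval (w : Fin b → W) : (W [⋀^Fin b]→ₗ[ℝ] ℝ) →ₗ[ℝ] ℝ where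
  toFun F := F w
  map_add' _ _ := rfl
  map_smul' _ _ := rfl

/-- Evaluation of an alternating `k`-form on monotone tuples of standard basis vectors. -/
noncomputable def sb_evmap (N k : ℕ) :
    ((Fin N → ℝ) [⋀^Fin k]→ₗ[ℝ] ℝ) →ₗ[ℝ] ({s : Finset (Fin N) // s.card = k} → ℝ) where
  toFun F := fun s => F (fun j => Pi.basisFun ℝ (Fin N) (s.1.orderIsoOfFin s.2 j))
  map_add' _ _ := rfl
  map_smul' _ _ := rfl

lemma sb_evmap_injective (N k : ℕ) : Function.Injective (sb_evmap N k) := by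
  rw [← LinearMap.ker_eq_bot, eq_bot_iff]
  intro F hF
  simp only [LinearMap.mem_ker] at hF
  have hF' : ∀ s : {s : Finset (Fin N) // s.card = k},
      F (fun j => Pi.basisFun ℝ (Fin N) (s.1.orderIsoOfFin s.2 j)) = 0 :=
    fun s => congrFun hF s
  rw [Submodule.mem_bot]
  refine Basis.ext_alternating (Pi.basisFun ℝ (Fin N)) ?_
  intro v hv
  classical
  set s : Finset (Fin N) := Finset.univ.image v with hs
  have hcard : s.card = k := by
    rw [hs, Finset.card_image_of_injective _ hv, Finset.card_univ, Fintype.card_fin]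
  set mono := s.orderIsoOfFin hcard
  have hmemv : ∀ j, v j ∈ s := fun j => Finset.mem_image_of_mem v (Finset.mem_univ j)
  set g : Fin k → {x // x ∈ s} := fun j => ⟨v j, hmemv j⟩ with hg
  have hginj : Function.Injective g := fun x y hxy => hv (congrArg Subtype.val hxy)
  have hgbij : Function.Bijective g := by
    have : Fintype.card {x // x ∈ s} = k := by simp [Fintype.card_coe, hcard]
    exact (Fintype.bijective_iff_injective_and_card g).2 ⟨hginj, by simp [this]⟩
  set σ : Equiv.Perm (Fin k) := (Equiv.ofBijective g hgbij).trans mono.toEquiv.symm with hσ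
  have hvs : (fun j => Pi.basisFun ℝ (Fin N) (v j))
      = (fun j => Pi.basisFun ℝ (Fin N) (mono j)) ∘ σ := by
    funext j
    simp only [Function.comp_apply, hσ, Equiv.trans_apply]
    congr 1
    have : mono (mono.toEquiv.symm (Equiv.ofBijective g hgbij j)) = g j := by
      simp
    rw [this]
  rw [hvs, AlternatingMap.map_perm, hF' ⟨s, hcard⟩, smul_zero]
  simp

end Aux

theorem skew_bollobas_subspaces (n m a b : ℕ)
    (A B : Fin m → Submodule ℝ (Fin n → ℝ))
    (hdisj : ∀ i, Module.finrank ℝ ↥(A i ⊓ B i) = 0)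
    (hA : ∀ i, Module.finrank ℝ ↥(A i) = a)
    (hB : ∀ i, Module.finrank ℝ ↥(B i) = b)
    (hcross : ∀ i j : Fin m, i < j → 0 < Module.finrank ℝ ↥(A i ⊓ B j)) :
    m ≤ (a + b).choose a := by
  classical
  rcases Nat.eq_zero_or_pos m with rfl | hm
  · exact Nat.zero_le _
  have hV : finrank ℝ (Fin n → ℝ) = n := Module.finrank_fin_fun ℝ
  -- dimension of the sups
  have hD : ∀ i j, finrank ℝ ↥(A i ⊔ B j) + finrank ℝ ↥(A i ⊓ B j) = a + b := by
    intro i j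
    have := Submodule.finrank_sup_add_finrank_inf_eq (A i) (B j)
    rw [hA i, hB j] at this
    omega
  have hDii : ∀ i, finrank ℝ ↥(A i ⊔ B i) = a + b := by
    intro i
    have h1 := hD i i
    rw [hdisj i] at h1
    omega
  have hab : a + b ≤ n := by
    have h1 : finrank ℝ ↥(A ⟨0, hm⟩ ⊔ B ⟨0, hm⟩) ≤ finrank ℝ (Fin n → ℝ) :=
      Submodule.finrank_le _
    rw [hDii ⟨0, hm⟩, hV] at h1
    exact h1
  -- find the common complement C
  obtain ⟨C, hCrank, hCD⟩ := sb_exists_compl (fun i => A i ⊔ B i) (N := a + b)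
    (fun i => (hDii i).le) (n - (a + b)) (by omega)
  -- the projection π
  have hq : finrank ℝ ((Fin n → ℝ) ⧸ C) = a + b := by
    have := C.finrank_quotient_add_finrank
    rw [hCrank, hV] at this
    omega
  let E : ((Fin n → ℝ) ⧸ C) ≃ₗ[ℝ] (Fin (a + b) → ℝ) :=
    ((Module.finBasis ℝ ((Fin n → ℝ) ⧸ C)).reindex (finCongr hq)).equivFun
  let π : (Fin n → ℝ) →ₗ[ℝ] (Fin (a + b) → ℝ) := E.toLinearMap ∘ₗ C.mkQ
  have hker : LinearMap.ker π = C := by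
    rw [LinearMap.ker_comp, LinearEquiv.ker, Submodule.comap_bot, Submodule.ker_mkQ]
  -- bases of the subspaces
  let u : Fin m → Fin a → (Fin n → ℝ) :=
    fun i k => ((Module.finBasis ℝ (A i)).reindex (finCongr (hA i))) k
  let v : Fin m → Fin b → (Fin n → ℝ) :=
    fun j k => ((Module.finBasis ℝ (B j)).reindex (finCongr (hB j))) k
  have hu : ∀ i, Submodule.span ℝ (Set.range (u i)) = A i := by
    intro i
    have h1 : Set.range (u i)
        = (A i).subtype '' Set.range ((Module.finBasis ℝ (A i)).reindex (finCongr (hA i))) := by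
      rw [← Set.range_comp]; rfl
    rw [h1, ← Submodule.map_span, Basis.span_eq, Submodule.map_subtype_top]
  have hv : ∀ j, Submodule.span ℝ (Set.range (v j)) = B j := by
    intro j
    have h1 : Set.range (v j)
        = (B j).subtype '' Set.range ((Module.finBasis ℝ (B j)).reindex (finCongr (hB j))) := by
      rw [← Set.range_comp]; rfl
    rw [h1, ← Submodule.map_span, Basis.span_eq, Submodule.map_subtype_top]
  -- the span of appended projected bases
  have hspan : ∀ i j, Submodule.span ℝ (Set.range (Fin.append (π ∘ u i) (π ∘ v j)))
      = Submodule.map π (A i ⊔ B j) := by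
    intro i j
    rw [sb_range_append, Set.range_comp, Set.range_comp, ← Set.image_union,
      ← Submodule.map_span, Submodule.span_union, hu i, hv j]
  -- the determinant functional
  set e : Basis (Fin (a + b)) ℝ (Fin (a + b) → ℝ) := Pi.basisFun ℝ (Fin (a + b)) with he
  -- diagonal determinants are nonzero
  have hdiag : ∀ i, e.det (Fin.append (π ∘ u i) (π ∘ v i)) ≠ 0 := by
    intro i
    have hmap : Submodule.map π (A i ⊔ B i) = ⊤ := by
      apply Submodule.eq_top_of_finrank_eq
      have hrange : Submodule.map π (A i ⊔ B i)
          = LinearMap.range (π ∘ₗ (A i ⊔ B i).subtype) := by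
        rw [LinearMap.range_comp, Submodule.range_subtype]
      have hkercomp : LinearMap.ker (π ∘ₗ (A i ⊔ B i).subtype) = ⊥ := by
        rw [LinearMap.ker_comp, hker, eq_bot_iff]
        rintro ⟨x, hxD⟩ hxC
        have : x ∈ C ⊓ (A i ⊔ B i) := ⟨hxC, hxD⟩
        rw [hCD i] at this
        simpa [Submodule.mem_bot] using this
      have := LinearMap.finrank_range_of_inj (LinearMap.ker_eq_bot.1 hkercomp)
      rw [hrange, this, hDii i, Module.finrank_fin_fun]
    have hbasis : LinearIndependent ℝ (Fin.append (π ∘ u i) (π ∘ v i))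
        ∧ Submodule.span ℝ (Set.range (Fin.append (π ∘ u i) (π ∘ v i))) = ⊤ := by
      have hsp : Submodule.span ℝ (Set.range (Fin.append (π ∘ u i) (π ∘ v i))) = ⊤ := by
        rw [hspan i i, hmap]
      refine ⟨?_, hsp⟩
      apply linearIndependent_of_top_le_span_of_card_eq_finrank (hsp.ge)
      rw [Fintype.card_fin, Module.finrank_fin_fun]
    have := (Basis.is_basis_iff_det e).1 hbasis
    exact this.ne_zero
  -- off-diagonal determinants vanish
  have hzero : ∀ i j : Fin m, i < j → e.det (Fin.append (π ∘ u i) (π ∘ v j)) = 0 := by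
    intro i j hij
    apply AlternatingMap.map_linearDependent
    intro hli
    have h1 := finrank_span_eq_card hli
    rw [hspan i j, Fintype.card_fin] at h1
    have h2 : finrank ℝ ↥(Submodule.map π (A i ⊔ B j)) ≤ finrank ℝ ↥(A i ⊔ B j) :=
      Submodule.finrank_map_le π (A i ⊔ B j)
    have h3 := hD i j
    have h4 := hcross i j hij
    omega
  -- the alternating maps
  set F : Fin m → ((Fin (a + b) → ℝ) [⋀^Fin b]→ₗ[ℝ] ℝ) :=
    fun i => sb_curry e.det (π ∘ u i) with hF
  have hFind : LinearIndependent ℝ F := by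
    apply sb_triangular F (fun j => sb_eval (π ∘ v j))
    · intro i
      show sb_curry e.det (π ∘ u i) (π ∘ v i) ≠ 0
      rw [sb_curry_apply]
      exact hdiag i
    · intro i j hij
      show sb_curry e.det (π ∘ u i) (π ∘ v j) = 0
      rw [sb_curry_apply]
      exact hzero i j hij
  -- push into the finite dimensional coordinate space
  have hGind : LinearIndependent ℝ ((sb_evmap (a + b) b) ∘ F) :=
    hFind.map' _ (LinearMap.ker_eq_bot.2 (sb_evmap_injective (a + b) b))
  have hcount := LinearIndependent.fintype_card_le_finrank hGind
  rw [Fintype.card_fin] at hcount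
  calc m ≤ finrank ℝ ({s : Finset (Fin (a + b)) // s.card = b} → ℝ) := hcount
    _ = Fintype.card {s : Finset (Fin (a + b)) // s.card = b} := by
        rw [Module.finrank_pi]
    _ = (a + b).choose b := by
        rw [Fintype.card_finset_len, Fintype.card_fin]
    _ = (a + b).choose a := by
        rw [← Nat.choose_symm (Nat.le_add_right a b), Nat.add_sub_cancel_left]
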